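/- One-period indifference pricing identity: in the one-period binomial model with traded stock driven by ε₁ (symmetric under P, with Q(ε₁=1) = (1-θ√h)/2) and a bounded payoff F measurable with respect to σ(ε₁, ε₂) where ε₂ is symmetric and independent under both P and Q, the number p = (1/γ)·E_Q[ log E_Q[e^{γF} | σ(ε₁)] ] satisfies: sup_α E_P[-exp(-γ(x + p + α(μh + σ√h ε₁) - F))] = sup_α E_P[-exp(-γ(x + α(μh + σ√h ε₁)))]. -/

import Mathlib

open MeasureTheory ProbabilityTheory Real
open scoped ENNReal

section helpers
variable {Ω : Type*} [m0 : MeasurableSpace Ω]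

lemma constant_on_atoms (ε₁ ε₂ F : Ω → ℝ)
    (hF : Measurable[(MeasurableSpace.comap ε₁ inferInstance) ⊔
      (MeasurableSpace.comap ε₂ inferInstance)] F)
    {ω ω' : Ω} (h1 : ε₁ ω = ε₁ ω') (h2 : ε₂ ω = ε₂ ω') : F ω = F ω' := by
  let m' : MeasurableSpace Ω :=
    { MeasurableSet' := fun s => (ω ∈ s ↔ ω' ∈ s)
      measurableSet_empty := Iff.rfl
      measurableSet_compl := fun s hs => not_congr hs
      measurableSet_iUnion := fun f hf => by
        simp only [Set.mem_iUnion]; exact exists_congr hf }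
  have hle : (MeasurableSpace.comap ε₁ inferInstance) ⊔
      (MeasurableSpace.comap ε₂ inferInstance) ≤ m' := by
    refine sup_le ?_ ?_
    · rintro s ⟨B, hB, rfl⟩
      show ω ∈ ε₁ ⁻¹' B ↔ ω' ∈ ε₁ ⁻¹' B
      simp [Set.mem_preimage, h1]
    · rintro s ⟨B, hB, rfl⟩
      show ω ∈ ε₂ ⁻¹' B ↔ ω' ∈ ε₂ ⁻¹' B
      simp [Set.mem_preimage, h2]
  have hmem : ω ∈ F ⁻¹' {F ω'} ↔ ω' ∈ F ⁻¹' {F ω'} :=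
    hle _ (hF (MeasurableSet.singleton (F ω')))
  simpa using hmem.mpr rfl

lemma four_atoms_eq (ε₁ ε₂ : Ω → ℝ)
    (h1v : ∀ ω, ε₁ ω = 1 ∨ ε₁ ω = -1) (h2v : ∀ ω, ε₂ ω = 1 ∨ ε₂ ω = -1)
    (φ : Ω → ℝ) (a b c d : ℝ)
    (hφ : ∀ ω, φ ω = if ε₁ ω = 1 then (if ε₂ ω = 1 then a else b)
      else (if ε₂ ω = 1 then c else d)) :
    φ = fun ω => (ε₁ ⁻¹' {1} ∩ ε₂ ⁻¹' {1}).indicator (fun _ => a) ω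
      + (ε₁ ⁻¹' {1} ∩ ε₂ ⁻¹' {-1}).indicator (fun _ => b) ω
      + (ε₁ ⁻¹' {-1} ∩ ε₂ ⁻¹' {1}).indicator (fun _ => c) ω
      + (ε₁ ⁻¹' {-1} ∩ ε₂ ⁻¹' {-1}).indicator (fun _ => d) ω := by
  have e1 : ((1:ℝ) = -1) = False := by norm_num
  have e2 : ((-1:ℝ) = 1) = False := by norm_num
  funext ω
  rcases h1v ω with h1 | h1 <;> rcases h2v ω with h2 | h2 <;>
    simp [hφ ω, Set.indicator_apply, Set.mem_inter_iff, Set.mem_preimage, h1, h2, e1, e2]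

lemma integrable_four_atoms (μ : Measure Ω) [IsFiniteMeasure μ]
    {ε₁ ε₂ : Ω → ℝ} (h1 : Measurable ε₁) (h2 : Measurable ε₂)
    (h1v : ∀ ω, ε₁ ω = 1 ∨ ε₁ ω = -1) (h2v : ∀ ω, ε₂ ω = 1 ∨ ε₂ ω = -1)
    (φ : Ω → ℝ) (a b c d : ℝ)
    (hφ : ∀ ω, φ ω = if ε₁ ω = 1 then (if ε₂ ω = 1 then a else b)
      else (if ε₂ ω = 1 then c else d)) :
    Integrable φ μ := by
  rw [four_atoms_eq ε₁ ε₂ h1v h2v φ a b c d hφ]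
  have m11 : MeasurableSet (ε₁ ⁻¹' {1} ∩ ε₂ ⁻¹' {1}) :=
    (h1 (measurableSet_singleton _)).inter (h2 (measurableSet_singleton _))
  have m12 : MeasurableSet (ε₁ ⁻¹' {1} ∩ ε₂ ⁻¹' {-1}) :=
    (h1 (measurableSet_singleton _)).inter (h2 (measurableSet_singleton _))
  have m21 : MeasurableSet (ε₁ ⁻¹' {-1} ∩ ε₂ ⁻¹' {1}) :=
    (h1 (measurableSet_singleton _)).inter (h2 (measurableSet_singleton _))
  have m22 : MeasurableSet (ε₁ ⁻¹' {-1} ∩ ε₂ ⁻¹' {-1}) :=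
    (h1 (measurableSet_singleton _)).inter (h2 (measurableSet_singleton _))
  exact ((((integrable_const a).indicator m11).add
    ((integrable_const b).indicator m12)).add
    ((integrable_const c).indicator m21)).add
    ((integrable_const d).indicator m22)

lemma integral_four_atoms (μ : Measure Ω) [IsFiniteMeasure μ]
    {ε₁ ε₂ : Ω → ℝ} (h1 : Measurable ε₁) (h2 : Measurable ε₂)
    (h1v : ∀ ω, ε₁ ω = 1 ∨ ε₁ ω = -1) (h2v : ∀ ω, ε₂ ω = 1 ∨ ε₂ ω = -1)
    (φ : Ω → ℝ) (a b c d : ℝ)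
    (hφ : ∀ ω, φ ω = if ε₁ ω = 1 then (if ε₂ ω = 1 then a else b)
      else (if ε₂ ω = 1 then c else d)) :
    ∫ ω, φ ω ∂μ = (μ (ε₁ ⁻¹' {1} ∩ ε₂ ⁻¹' {1})).toReal * a
      + (μ (ε₁ ⁻¹' {1} ∩ ε₂ ⁻¹' {-1})).toReal * b
      + (μ (ε₁ ⁻¹' {-1} ∩ ε₂ ⁻¹' {1})).toReal * c
      + (μ (ε₁ ⁻¹' {-1} ∩ ε₂ ⁻¹' {-1})).toReal * d := by
  have m11 : MeasurableSet (ε₁ ⁻¹' {1} ∩ ε₂ ⁻¹' {1}) :=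
    (h1 (measurableSet_singleton _)).inter (h2 (measurableSet_singleton _))
  have m12 : MeasurableSet (ε₁ ⁻¹' {1} ∩ ε₂ ⁻¹' {-1}) :=
    (h1 (measurableSet_singleton _)).inter (h2 (measurableSet_singleton _))
  have m21 : MeasurableSet (ε₁ ⁻¹' {-1} ∩ ε₂ ⁻¹' {1}) :=
    (h1 (measurableSet_singleton _)).inter (h2 (measurableSet_singleton _))
  have m22 : MeasurableSet (ε₁ ⁻¹' {-1} ∩ ε₂ ⁻¹' {-1}) :=
    (h1 (measurableSet_singleton _)).inter (h2 (measurableSet_singleton _))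
  have i11 : Integrable (fun ω => (ε₁ ⁻¹' {1} ∩ ε₂ ⁻¹' {1}).indicator (fun _ => a) ω) μ :=
    (integrable_const a).indicator m11
  have i12 : Integrable (fun ω => (ε₁ ⁻¹' {1} ∩ ε₂ ⁻¹' {-1}).indicator (fun _ => b) ω) μ :=
    (integrable_const b).indicator m12
  have i21 : Integrable (fun ω => (ε₁ ⁻¹' {-1} ∩ ε₂ ⁻¹' {1}).indicator (fun _ => c) ω) μ :=
    (integrable_const c).indicator m21
  have i22 : Integrable (fun ω => (ε₁ ⁻¹' {-1} ∩ ε₂ ⁻¹' {-1}).indicator (fun _ => d) ω) μ :=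
    (integrable_const d).indicator m22
  have j2 : Integrable (fun ω => (ε₁ ⁻¹' {1} ∩ ε₂ ⁻¹' {1}).indicator (fun _ => a) ω
      + (ε₁ ⁻¹' {1} ∩ ε₂ ⁻¹' {-1}).indicator (fun _ => b) ω) μ := i11.add i12
  have j3 : Integrable (fun ω => (ε₁ ⁻¹' {1} ∩ ε₂ ⁻¹' {1}).indicator (fun _ => a) ω
      + (ε₁ ⁻¹' {1} ∩ ε₂ ⁻¹' {-1}).indicator (fun _ => b) ω
      + (ε₁ ⁻¹' {-1} ∩ ε₂ ⁻¹' {1}).indicator (fun _ => c) ω) μ := j2.add i21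
  rw [four_atoms_eq ε₁ ε₂ h1v h2v φ a b c d hφ]
  rw [integral_add j3 i22, integral_add j2 i21, integral_add i11 i12,
    integral_indicator_const _ m11, integral_indicator_const _ m12,
    integral_indicator_const _ m21, integral_indicator_const _ m22]
  simp [smul_eq_mul, mul_comm, measureReal_def]
end helpers

lemma pre_inter_ite {Ω : Type*} (f : Ω → ℝ) (t : ℝ) (B : Set ℝ) (S : Set Ω)
    [Decidable (t ∈ B)] :
    (f ⁻¹' {t} ∩ S) ∩ f ⁻¹' B = if t ∈ B then f ⁻¹' {t} ∩ S else ∅ := by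
  split_ifs with ht
  · ext ω
    constructor
    · exact fun hx => hx.1
    · intro hx
      refine ⟨hx, ?_⟩
      have hft : f ω = t := hx.1
      simp [Set.mem_preimage, hft, ht]
  · ext ω
    simp only [Set.mem_inter_iff, Set.mem_preimage, Set.mem_empty_iff_false, iff_false, not_and]
    rintro ⟨h1', _⟩ hb
    have hft : f ω = t := h1'
    exact ht (hft ▸ hb)

/-- the one-period utility indifference price identity. -/
theorem one_period_indifference_identity {Ω : Type*} [m0 : MeasurableSpace Ω]
    (P Q : Measure Ω) [IsProbabilityMeasure P] [IsProbabilityMeasure Q]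
    (ε₁ ε₂ : Ω → ℝ) (h1meas : Measurable ε₁) (h2meas : Measurable ε₂)
    (h1val : ∀ ω, ε₁ ω = 1 ∨ ε₁ ω = -1) (h2val : ∀ ω, ε₂ ω = 1 ∨ ε₂ ω = -1)
    (hP1 : P {ω | ε₁ ω = 1} = 1 / 2) (hP2 : P {ω | ε₂ ω = 1} = 1 / 2)
    (hindP : IndepFun ε₁ ε₂ P)
    (h σ θ γ μ x : ℝ) (hh : 0 < h) (hσ : 0 < σ) (hγ : 0 < γ)
    (hθ0 : 0 ≤ θ * Real.sqrt h) (hθ1 : θ * Real.sqrt h < 1) (hμ : μ = θ * σ)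
    (hQ1 : Q {ω | ε₁ ω = 1} = ENNReal.ofReal ((1 - θ * Real.sqrt h) / 2))
    (hQ2 : Q {ω | ε₂ ω = 1} = 1 / 2)
    (hindQ : IndepFun ε₁ ε₂ Q)
    (F : Ω → ℝ)
    (hFmeas : Measurable[(MeasurableSpace.comap ε₁ inferInstance) ⊔
      (MeasurableSpace.comap ε₂ inferInstance)] F)
    (C : ℝ) (hFbd : ∀ ω, |F ω| ≤ C) :
    let p : ℝ := (1 / γ) * ∫ ω, Real.log
      ((Q[fun ω' => Real.exp (γ * F ω') | MeasurableSpace.comap ε₁ inferInstance]) ω) ∂Q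
    (⨆ α : ℝ, ∫ ω, -Real.exp (-γ * (x + p + α * (μ * h + σ * Real.sqrt h * ε₁ ω) - F ω)) ∂P)
      = ⨆ α : ℝ, ∫ ω, -Real.exp (-γ * (x + α * (μ * h + σ * Real.sqrt h * ε₁ ω))) ∂P := by
  classical
  intro p
  have hpdef : p = (1 / γ) * ∫ ω, Real.log
      ((Q[fun ω' => Real.exp (γ * F ω') | MeasurableSpace.comap ε₁ inferInstance]) ω) ∂Q := rfl
  clear_value p
  have e1 : ((1:ℝ) = -1) = False := by norm_num
  have e2 : ((-1:ℝ) = 1) = False := by norm_num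
  set sh := Real.sqrt h with hshdef
  have hsh : 0 < sh := Real.sqrt_pos.mpr hh
  have hsh2 : sh ^ 2 = h := Real.sq_sqrt hh.le
  set qr := (1 - θ * sh) / 2 with hqrdef
  have hq0 : 0 ≤ qr := by rw [hqrdef]; linarith
  -- basic measurable sets
  have mA1 : MeasurableSet (ε₁ ⁻¹' {1}) := h1meas (measurableSet_singleton _)
  have mB1 : MeasurableSet (ε₂ ⁻¹' {1}) := h2meas (measurableSet_singleton _)
  have m11 : MeasurableSet (ε₁ ⁻¹' {1} ∩ ε₂ ⁻¹' {1}) :=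
    (h1meas (measurableSet_singleton _)).inter (h2meas (measurableSet_singleton _))
  have m12 : MeasurableSet (ε₁ ⁻¹' {1} ∩ ε₂ ⁻¹' {(-1:ℝ)}) :=
    (h1meas (measurableSet_singleton _)).inter (h2meas (measurableSet_singleton _))
  have m21 : MeasurableSet (ε₁ ⁻¹' {(-1:ℝ)} ∩ ε₂ ⁻¹' {1}) :=
    (h1meas (measurableSet_singleton _)).inter (h2meas (measurableSet_singleton _))
  have m22 : MeasurableSet (ε₁ ⁻¹' {(-1:ℝ)} ∩ ε₂ ⁻¹' {(-1:ℝ)}) :=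
    (h1meas (measurableSet_singleton _)).inter (h2meas (measurableSet_singleton _))
  -- complements
  have hcompl1 : ε₁ ⁻¹' {(-1:ℝ)} = (ε₁ ⁻¹' {1})ᶜ := by
    ext ω; rcases h1val ω with h' | h' <;>
      simp [Set.mem_preimage, Set.mem_compl_iff, h', e1, e2]
  have hcompl2 : ε₂ ⁻¹' {(-1:ℝ)} = (ε₂ ⁻¹' {1})ᶜ := by
    ext ω; rcases h2val ω with h' | h' <;>
      simp [Set.mem_preimage, Set.mem_compl_iff, h', e1, e2]
  -- one-dimensional measures
  have hP1' : P (ε₁ ⁻¹' {1}) = 1/2 := hP1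
  have hP2' : P (ε₂ ⁻¹' {1}) = 1/2 := hP2
  have hQ1' : Q (ε₁ ⁻¹' {1}) = ENNReal.ofReal qr := hQ1
  have hQ2' : Q (ε₂ ⁻¹' {1}) = 1/2 := hQ2
  have hP1c : P (ε₁ ⁻¹' {(-1:ℝ)}) = 1/2 := by
    rw [hcompl1, measure_compl mA1 (measure_ne_top _ _), measure_univ, hP1']
    exact ENNReal.sub_half (by norm_num)
  have hP2c : P (ε₂ ⁻¹' {(-1:ℝ)}) = 1/2 := by
    rw [hcompl2, measure_compl mB1 (measure_ne_top _ _), measure_univ, hP2']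
    exact ENNReal.sub_half (by norm_num)
  have hQ1c : Q (ε₁ ⁻¹' {(-1:ℝ)}) = ENNReal.ofReal (1 - qr) := by
    rw [hcompl1, measure_compl mA1 (measure_ne_top _ _), measure_univ, hQ1',
      ENNReal.ofReal_sub 1 hq0, ENNReal.ofReal_one]
  have hQ2c : Q (ε₂ ⁻¹' {(-1:ℝ)}) = 1/2 := by
    rw [hcompl2, measure_compl mB1 (measure_ne_top _ _), measure_univ, hQ2']
    exact ENNReal.sub_half (by norm_num)
  -- P atom measures
  have hP11 : P (ε₁ ⁻¹' {1} ∩ ε₂ ⁻¹' {1}) = 1/2 * (1/2) := by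
    rw [hindP.measure_inter_preimage_eq_mul _ _ (measurableSet_singleton _)
      (measurableSet_singleton _), hP1', hP2']
  have hP12 : P (ε₁ ⁻¹' {1} ∩ ε₂ ⁻¹' {(-1:ℝ)}) = 1/2 * (1/2) := by
    rw [hindP.measure_inter_preimage_eq_mul _ _ (measurableSet_singleton _)
      (measurableSet_singleton _), hP1', hP2c]
  have hP21 : P (ε₁ ⁻¹' {(-1:ℝ)} ∩ ε₂ ⁻¹' {1}) = 1/2 * (1/2) := by
    rw [hindP.measure_inter_preimage_eq_mul _ _ (measurableSet_singleton _)
      (measurableSet_singleton _), hP1c, hP2']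
  have hP22 : P (ε₁ ⁻¹' {(-1:ℝ)} ∩ ε₂ ⁻¹' {(-1:ℝ)}) = 1/2 * (1/2) := by
    rw [hindP.measure_inter_preimage_eq_mul _ _ (measurableSet_singleton _)
      (measurableSet_singleton _), hP1c, hP2c]
  have ht14 : ((1:ℝ≥0∞)/2 * (1/2)).toReal = 1/4 := by
    rw [ENNReal.toReal_mul]; norm_num
  have hne14 : ((1:ℝ≥0∞)/2 * (1/2)) ≠ 0 := by norm_num
  -- the four atoms are nonempty
  obtain ⟨ω11, hω11⟩ : (ε₁ ⁻¹' {1} ∩ ε₂ ⁻¹' {1}).Nonempty :=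
    nonempty_of_measure_ne_zero (μ := P) (by rw [hP11]; exact hne14)
  obtain ⟨ω12, hω12⟩ : (ε₁ ⁻¹' {1} ∩ ε₂ ⁻¹' {(-1:ℝ)}).Nonempty :=
    nonempty_of_measure_ne_zero (μ := P) (by rw [hP12]; exact hne14)
  obtain ⟨ω21, hω21⟩ : (ε₁ ⁻¹' {(-1:ℝ)} ∩ ε₂ ⁻¹' {1}).Nonempty :=
    nonempty_of_measure_ne_zero (μ := P) (by rw [hP21]; exact hne14)
  obtain ⟨ω22, hω22⟩ : (ε₁ ⁻¹' {(-1:ℝ)} ∩ ε₂ ⁻¹' {(-1:ℝ)}).Nonempty :=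
    nonempty_of_measure_ne_zero (μ := P) (by rw [hP22]; exact hne14)
  set a := F ω11 with hadef
  set b := F ω12 with hbdef
  set c := F ω21 with hcdef
  set d := F ω22 with hddef
  have hFform : ∀ ω, F ω = if ε₁ ω = 1 then (if ε₂ ω = 1 then a else b)
      else (if ε₂ ω = 1 then c else d) := by
    intro ω
    rcases h1val ω with h' | h' <;> rcases h2val ω with h'' | h''
    · rw [if_pos h', if_pos h'']
      exact constant_on_atoms ε₁ ε₂ F hFmeas
        (h'.trans (Set.mem_singleton_iff.mp hω11.1).symm)
        (h''.trans (Set.mem_singleton_iff.mp hω11.2).symm)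
    · rw [if_pos h', if_neg (by rw [h'']; norm_num)]
      exact constant_on_atoms ε₁ ε₂ F hFmeas
        (h'.trans (Set.mem_singleton_iff.mp hω12.1).symm)
        (h''.trans (Set.mem_singleton_iff.mp hω12.2).symm)
    · rw [if_neg (by rw [h']; norm_num), if_pos h'']
      exact constant_on_atoms ε₁ ε₂ F hFmeas
        (h'.trans (Set.mem_singleton_iff.mp hω21.1).symm)
        (h''.trans (Set.mem_singleton_iff.mp hω21.2).symm)
    · rw [if_neg (by rw [h']; norm_num), if_neg (by rw [h'']; norm_num)]
      exact constant_on_atoms ε₁ ε₂ F hFmeas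
        (h'.trans (Set.mem_singleton_iff.mp hω22.1).symm)
        (h''.trans (Set.mem_singleton_iff.mp hω22.2).symm)
  set G1 : ℝ := (Real.exp (γ * a) + Real.exp (γ * b)) / 2 with hG1
  set G2 : ℝ := (Real.exp (γ * c) + Real.exp (γ * d)) / 2 with hG2
  have hG1pos : 0 < G1 := by rw [hG1]; positivity
  have hG2pos : 0 < G2 := by rw [hG2]; positivity
  set g : Ω → ℝ := fun ω => if ε₁ ω = 1 then G1 else G2 with hgdef
  have hf'form : ∀ ω, Real.exp (γ * F ω) = if ε₁ ω = 1
      then (if ε₂ ω = 1 then Real.exp (γ * a) else Real.exp (γ * b))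
      else (if ε₂ ω = 1 then Real.exp (γ * c) else Real.exp (γ * d)) := by
    intro ω
    rcases h1val ω with h' | h' <;> rcases h2val ω with h'' | h'' <;>
      simp [hFform ω, h', h'', e1, e2]
  have hgform : ∀ ω, g ω = if ε₁ ω = 1 then (if ε₂ ω = 1 then G1 else G1)
      else (if ε₂ ω = 1 then G2 else G2) := by
    intro ω
    rcases h1val ω with h' | h' <;> simp [hgdef, h', e1, e2]
  -- Q atom measures (toReal)
  have hQ11 : (Q (ε₁ ⁻¹' {1} ∩ ε₂ ⁻¹' {1})).toReal = qr / 2 := by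
    rw [hindQ.measure_inter_preimage_eq_mul _ _ (measurableSet_singleton _)
      (measurableSet_singleton _), hQ1', hQ2', ENNReal.toReal_mul,
      ENNReal.toReal_ofReal hq0]
    rw [show ((1:ℝ≥0∞)/2).toReal = (1/2:ℝ) by norm_num]
    ring
  have hQ12 : (Q (ε₁ ⁻¹' {1} ∩ ε₂ ⁻¹' {(-1:ℝ)})).toReal = qr / 2 := by
    rw [hindQ.measure_inter_preimage_eq_mul _ _ (measurableSet_singleton _)
      (measurableSet_singleton _), hQ1', hQ2c, ENNReal.toReal_mul,
      ENNReal.toReal_ofReal hq0]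
    rw [show ((1:ℝ≥0∞)/2).toReal = (1/2:ℝ) by norm_num]
    ring
  have hQ21 : (Q (ε₁ ⁻¹' {(-1:ℝ)} ∩ ε₂ ⁻¹' {1})).toReal = (1 - qr) / 2 := by
    rw [hindQ.measure_inter_preimage_eq_mul _ _ (measurableSet_singleton _)
      (measurableSet_singleton _), hQ1c, hQ2', ENNReal.toReal_mul,
      ENNReal.toReal_ofReal (by rw [hqrdef]; linarith)]
    rw [show ((1:ℝ≥0∞)/2).toReal = (1/2:ℝ) by norm_num]
    ring
  have hQ22 : (Q (ε₁ ⁻¹' {(-1:ℝ)} ∩ ε₂ ⁻¹' {(-1:ℝ)})).toReal = (1 - qr) / 2 := by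
    rw [hindQ.measure_inter_preimage_eq_mul _ _ (measurableSet_singleton _)
      (measurableSet_singleton _), hQ1c, hQ2c, ENNReal.toReal_mul,
      ENNReal.toReal_ofReal (by rw [hqrdef]; linarith)]
    rw [show ((1:ℝ≥0∞)/2).toReal = (1/2:ℝ) by norm_num]
    ring
  -- identify the conditional expectation
  have hm : MeasurableSpace.comap ε₁ inferInstance ≤ m0 := measurable_iff_comap_le.mp h1meas
  have hf'int : Integrable (fun ω' => Real.exp (γ * F ω')) Q :=
    integrable_four_atoms Q h1meas h2meas h1val h2val _ _ _ _ _ hf'form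
  have hgint : Integrable g Q :=
    integrable_four_atoms Q h1meas h2meas h1val h2val _ _ _ _ _ hgform
  have hgm : AEStronglyMeasurable[MeasurableSpace.comap ε₁ inferInstance] g Q := by
    have hε : Measurable[MeasurableSpace.comap ε₁ inferInstance] ε₁ :=
      measurable_iff_comap_le.mpr le_rfl
    have : Measurable[MeasurableSpace.comap ε₁ inferInstance] g :=
      Measurable.ite (hε (measurableSet_singleton 1)) measurable_const measurable_const
    exact this.stronglyMeasurable.aestronglyMeasurable
  have hcond : g =ᵐ[Q] Q[fun ω' => Real.exp (γ * F ω') |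
      MeasurableSpace.comap ε₁ inferInstance] := by
    refine ae_eq_condExp_of_forall_setIntegral_eq hm hf'int
      (fun s _ _ => hgint.integrableOn) ?_ hgm
    rintro s ⟨B, hBm, rfl⟩ -
    rw [integral_four_atoms (Q.restrict (ε₁ ⁻¹' B)) h1meas h2meas h1val h2val g
        G1 G1 G2 G2 hgform,
      integral_four_atoms (Q.restrict (ε₁ ⁻¹' B)) h1meas h2meas h1val h2val _
        (Real.exp (γ * a)) (Real.exp (γ * b)) (Real.exp (γ * c)) (Real.exp (γ * d)) hf'form,
      Measure.restrict_apply m11, Measure.restrict_apply m12,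
      Measure.restrict_apply m21, Measure.restrict_apply m22,
      pre_inter_ite ε₁ 1 B (ε₂ ⁻¹' {1}), pre_inter_ite ε₁ 1 B (ε₂ ⁻¹' {(-1:ℝ)}),
      pre_inter_ite ε₁ (-1) B (ε₂ ⁻¹' {1}), pre_inter_ite ε₁ (-1) B (ε₂ ⁻¹' {(-1:ℝ)})]
    by_cases hB1 : (1:ℝ) ∈ B <;> by_cases hB2 : (-1:ℝ) ∈ B <;>
      simp only [hB1, hB2, if_true, if_false, measure_empty, ENNReal.toReal_zero] <;>
      rw [hG1, hG2] <;>
      first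
      | (rw [hQ11, hQ12, hQ21, hQ22]; ring)
      | (rw [hQ11, hQ12]; ring)
      | (rw [hQ21, hQ22]; ring)
      | ring
  -- compute p
  have hloggform : ∀ ω, Real.log (g ω) = if ε₁ ω = 1
      then (if ε₂ ω = 1 then Real.log G1 else Real.log G1)
      else (if ε₂ ω = 1 then Real.log G2 else Real.log G2) := by
    intro ω
    rcases h1val ω with h' | h' <;> simp [hgdef, h', e1, e2]
  have hlogae : (fun ω => Real.log ((Q[fun ω' => Real.exp (γ * F ω') |
      MeasurableSpace.comap ε₁ inferInstance]) ω)) =ᵐ[Q] fun ω => Real.log (g ω) :=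
    hcond.symm.mono fun ω hω => congrArg Real.log hω
  have hpval : γ * p = qr * Real.log G1 + (1 - qr) * Real.log G2 := by
    rw [hpdef, integral_congr_ae hlogae,
      integral_four_atoms Q h1meas h2meas h1val h2val _
        (Real.log G1) (Real.log G1) (Real.log G2) (Real.log G2) hloggform,
      hQ11, hQ12, hQ21, hQ22]
    field_simp
    ring
  -- the shift β
  set β : ℝ := (Real.log G1 - Real.log G2) / (γ * (2 * σ * sh)) with hβdef
  have hβprop : γ * β * (2 * σ * sh) = Real.log G1 - Real.log G2 := by
    rw [hβdef]; field_simp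
  -- exponent identities
  have hE1 : ∀ α : ℝ, -γ * (x + p + α * (μ * h + σ * sh * 1)) + Real.log G1
      = -γ * (x + (α - β) * (μ * h + σ * sh * 1)) := by
    intro α
    rw [hμ, ← hsh2]
    have hq := hpval
    rw [hqrdef] at hq
    linear_combination (-1 : ℝ) * hq - ((θ * sh + 1) / 2) * hβprop
  have hE2 : ∀ α : ℝ, -γ * (x + p + α * (μ * h + σ * sh * (-1))) + Real.log G2
      = -γ * (x + (α - β) * (μ * h + σ * sh * (-1))) := by
    intro α
    rw [hμ, ← hsh2]
    have hq := hpval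
    rw [hqrdef] at hq
    linear_combination (-1 : ℝ) * hq - ((θ * sh - 1) / 2) * hβprop
  -- the per-α identity
  have key : ∀ α : ℝ,
      (∫ ω, -Real.exp (-γ * (x + p + α * (μ * h + σ * sh * ε₁ ω) - F ω)) ∂P)
      = ∫ ω, -Real.exp (-γ * (x + (α - β) * (μ * h + σ * sh * ε₁ ω))) ∂P := by
    intro α
    rw [integral_four_atoms P h1meas h2meas h1val h2val _
        (-Real.exp (-γ * (x + p + α * (μ * h + σ * sh * 1) - a)))
        (-Real.exp (-γ * (x + p + α * (μ * h + σ * sh * 1) - b)))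
        (-Real.exp (-γ * (x + p + α * (μ * h + σ * sh * (-1)) - c)))
        (-Real.exp (-γ * (x + p + α * (μ * h + σ * sh * (-1)) - d)))
        (by intro ω; rcases h1val ω with h' | h' <;> rcases h2val ω with h'' | h'' <;>
          simp [hFform ω, h', h'', e1, e2]),
      integral_four_atoms P h1meas h2meas h1val h2val _
        (-Real.exp (-γ * (x + (α - β) * (μ * h + σ * sh * 1))))
        (-Real.exp (-γ * (x + (α - β) * (μ * h + σ * sh * 1))))
        (-Real.exp (-γ * (x + (α - β) * (μ * h + σ * sh * (-1)))))
        (-Real.exp (-γ * (x + (α - β) * (μ * h + σ * sh * (-1)))))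
        (by intro ω; rcases h1val ω with h' | h' <;> rcases h2val ω with h'' | h'' <;>
          simp [h', h'', e1, e2]),
      hP11, hP12, hP21, hP22, ht14]
    have k1 : Real.exp (-γ * (x + p + α * (μ * h + σ * sh * 1) - a))
        + Real.exp (-γ * (x + p + α * (μ * h + σ * sh * 1) - b))
        = 2 * Real.exp (-γ * (x + (α - β) * (μ * h + σ * sh * 1))) := by
      rw [show -γ * (x + p + α * (μ * h + σ * sh * 1) - a)
          = -γ * (x + p + α * (μ * h + σ * sh * 1)) + γ * a by ring,
        show -γ * (x + p + α * (μ * h + σ * sh * 1) - b)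
          = -γ * (x + p + α * (μ * h + σ * sh * 1)) + γ * b by ring,
        Real.exp_add, Real.exp_add, ← hE1 α, Real.exp_add, Real.exp_log hG1pos, hG1]
      ring
    have k2 : Real.exp (-γ * (x + p + α * (μ * h + σ * sh * (-1)) - c))
        + Real.exp (-γ * (x + p + α * (μ * h + σ * sh * (-1)) - d))
        = 2 * Real.exp (-γ * (x + (α - β) * (μ * h + σ * sh * (-1)))) := by
      rw [show -γ * (x + p + α * (μ * h + σ * sh * (-1)) - c)
          = -γ * (x + p + α * (μ * h + σ * sh * (-1))) + γ * c by ring,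
        show -γ * (x + p + α * (μ * h + σ * sh * (-1)) - d)
          = -γ * (x + p + α * (μ * h + σ * sh * (-1))) + γ * d by ring,
        Real.exp_add, Real.exp_add, ← hE2 α, Real.exp_add, Real.exp_log hG2pos, hG2]
      ring
    linarith [k1, k2]
  -- conclude via a change of variables in the supremum
  have hsurj : Function.Surjective (fun α : ℝ => α - β) := fun y => ⟨y + β, by ring⟩
  calc (⨆ α : ℝ, ∫ ω, -Real.exp (-γ * (x + p + α * (μ * h + σ * sh * ε₁ ω) - F ω)) ∂P)
      = ⨆ α : ℝ, ∫ ω, -Real.exp (-γ * (x + (α - β) * (μ * h + σ * sh * ε₁ ω))) ∂P :=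
        iSup_congr key
    _ = ⨆ α : ℝ, ∫ ω, -Real.exp (-γ * (x + α * (μ * h + σ * sh * ε₁ ω))) ∂P :=
        hsurj.iSup_comp (fun α => ∫ ω, -Real.exp (-γ * (x + α * (μ * h + σ * sh * ε₁ ω))) ∂P)
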